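/- For every character χ : G →* ℂˣ, the operator A_χ := ∑ g, conj (χ g) • Q g is unitary: (A_χ)ᴴ * A_χ = 1 and A_χ * (A_χ)ᴴ = 1 as matrices of size (Fin r × Fin s). -/

import Mathlib

open scoped Kronecker
open Matrix

lemma vecMulVec_mul_vecMulVec' {r : ℕ} (x y : Fin r → ℂ) :
    Matrix.vecMulVec x (star x) * Matrix.vecMulVec y (star y)
      = (∑ i : Fin r, star (x i) * y i) • Matrix.vecMulVec x (star y) := by
  ext i j
  simp only [Matrix.mul_apply, Matrix.vecMulVec_apply, Matrix.smul_apply, Pi.star_apply,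
    smul_eq_mul, Finset.sum_mul]
  exact Finset.sum_congr rfl fun k _ => by ring

/-- For a finite commutative gauge group `G` with an ideal QRF, the
operator `A_χ := ∑ g, conj (χ g) • Q g` associated with a character `χ : G →* ℂˣ`
is unitary: `(A_χ)ᴴ * A_χ = 1` and `A_χ * (A_χ)ᴴ = 1`. -/
theorem A_chi_unitary
    {G : Type*} [CommGroup G] [Fintype G] [DecidableEq G] {r s : ℕ}
    (U_R : G → Matrix (Fin r) (Fin r) ℂ)
    (U_S : G → Matrix (Fin s) (Fin s) ℂ)
    (hR_mul : ∀ g h : G, U_R (g * h) = U_R g * U_R h)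
    (hR_one : U_R 1 = 1)
    (hR_unitary : ∀ g : G, (U_R g)ᴴ * U_R g = 1)
    (hS_mul : ∀ g h : G, U_S (g * h) = U_S g * U_S h)
    (hS_one : U_S 1 = 1)
    (hS_unitary : ∀ g : G, (U_S g)ᴴ * U_S g = 1)
    (φ : G → (Fin r → ℂ))
    (hcov : ∀ g h : G, (U_R h).mulVec (φ g) = φ (h * g))
    (horth : ∀ g h : G,
      (∑ i : Fin r, star (φ g i) * φ h i) = if g = h then 1 else 0)
    (hcomplete : ∑ g : G, Matrix.vecMulVec (φ g) (star (φ g))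
        = (1 : Matrix (Fin r) (Fin r) ℂ))
    (Q : G → Matrix (Fin r × Fin s) (Fin r × Fin s) ℂ)
    (hQ : ∀ g : G, Q g = (Matrix.vecMulVec (φ g) (star (φ g))) ⊗ₖ
        (1 : Matrix (Fin s) (Fin s) ℂ))
    (χ : G →* ℂˣ)
    (A : Matrix (Fin r × Fin s) (Fin r × Fin s) ℂ)
    (hA : A = ∑ g : G, star ((χ g : ℂ)) • Q g) :
    Aᴴ * A = 1 ∧ A * Aᴴ = 1 := by
  -- |χ g| = 1
  have hc : ∀ g : G, star ((χ g : ℂ)) * (χ g : ℂ) = 1 := by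
    intro g
    have hpow : ((χ g : ℂ)) ^ Fintype.card G = 1 := by
      have h1 : (χ g) ^ Fintype.card G = 1 := by
        rw [← MonoidHom.map_pow, pow_card_eq_one, MonoidHom.map_one]
      rw [← Units.val_pow_eq_pow_val, h1, Units.val_one]
    have hnorm : ‖(χ g : ℂ)‖ = 1 :=
      Complex.norm_eq_one_of_pow_eq_one hpow Fintype.card_ne_zero
    have h2 : ((Complex.normSq (χ g : ℂ) : ℂ)) = star ((χ g : ℂ)) * (χ g : ℂ) := by
      rw [Complex.normSq_eq_conj_mul_self, Complex.star_def]
    rw [← h2, Complex.normSq_eq_norm_sq, hnorm]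
    norm_num
  -- Q g is Hermitian
  have hQH : ∀ g : G, (Q g)ᴴ = Q g := by
    intro g
    rw [hQ]
    ext ⟨i, k⟩ ⟨j, l⟩
    simp only [Matrix.conjTranspose_apply, Matrix.kroneckerMap_apply, Matrix.vecMulVec_apply,
      Matrix.one_apply]
    split_ifs with h h' <;> simp_all [eq_comm, mul_comm]
  -- Q g * Q h
  have hQQ : ∀ g h : G, Q g * Q h = if g = h then Q g else 0 := by
    intro g h
    rw [hQ g, hQ h, ← Matrix.mul_kronecker_mul, Matrix.one_mul,
      vecMulVec_mul_vecMulVec', horth]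
    by_cases hgh : g = h
    · subst hgh; simp [hQ]
    · simp [hgh, Matrix.zero_kronecker]
  -- sum of Q g is identity
  have hsum : ∑ g : G, Q g = 1 := by
    ext ⟨i, k⟩ ⟨j, l⟩
    simp only [Matrix.sum_apply, hQ, Matrix.kroneckerMap_apply]
    rw [← Finset.sum_mul]
    have hij := congrFun (congrFun hcomplete i) j
    rw [Matrix.sum_apply] at hij
    rw [hij]
    by_cases h1 : i = j <;> by_cases h2 : k = l <;>
      simp [Matrix.one_apply, Prod.ext_iff, h1, h2]
  subst hA
  have hAH : (∑ g : G, star ((χ g : ℂ)) • Q g)ᴴ = ∑ g : G, ((χ g : ℂ)) • Q g := by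
    rw [Matrix.conjTranspose_sum]
    exact Finset.sum_congr rfl fun g _ => by
      rw [Matrix.conjTranspose_smul, star_star, hQH]
  have key : ∀ (c d : G → ℂ), (∀ g, c g * d g = 1) →
      (∑ g : G, c g • Q g) * (∑ g : G, d g • Q g) = 1 := by
    intro c d hcd
    rw [Finset.sum_mul_sum]
    have : ∀ g ∈ Finset.univ, ∀ h ∈ Finset.univ,
        (c g • Q g) * (d h • Q h) = if g = h then (c g * d h) • Q g else 0 := by
      intro g _ h _
      rw [smul_mul_assoc, mul_smul_comm, hQQ, smul_ite, smul_ite, smul_zero,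
        smul_zero, smul_smul]
    calc (∑ g : G, ∑ h : G, (c g • Q g) * (d h • Q h))
        = ∑ g : G, ∑ h : G, if g = h then (c g * d h) • Q g else 0 := by
          exact Finset.sum_congr rfl fun g hg => Finset.sum_congr rfl fun h hh =>
            this g hg h hh
      _ = ∑ g : G, (c g * d g) • Q g := by
          refine Finset.sum_congr rfl fun g _ => ?_
          rw [Finset.sum_ite_eq]
          simp
      _ = ∑ g : G, Q g := Finset.sum_congr rfl fun g _ => by rw [hcd g, one_smul]
      _ = 1 := hsum
  constructor
  · rw [hAH]
    exact key _ _ fun g => by rw [mul_comm]; exact hc g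
  · rw [hAH]
    exact key _ _ fun g => hc g
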